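/- Let n ≥ 1 and let A and B be n×n complex matrices. Then the symmetric (Strang) operator-exponential splitting approximates the exponential of the sum to third order in the time step: there exist constants C > 0 and t₀ > 0 such that for all real t with |t| ≤ t₀ one has ‖exp(t(A+B)) − exp((t/2)B)·exp(tA)·exp((t/2)B)‖ ≤ C·|t|³. -/

import Mathlib

attribute [local instance]
  Matrix.instL2OpNormedAddCommGroup Matrix.instL2OpNormedSpace
  Matrix.instL2OpNormedRing Matrix.instL2OpNormedAlgebra

open NormedSpace Finset Nat

section Aux

variable {R : Type*} [NormedRing R] [NormedAlgebra ℂ R] [CompleteSpace R]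

/-- Quadratic Taylor polynomial of the exponential. -/
noncomputable def Tq (M : R) : R := 1 + M + (2:ℂ)⁻¹ • (M*M)

theorem Tq_tail_bound (M : R) :
    ‖NormedSpace.exp M - Tq M‖ ≤ ‖M‖^3 * Real.exp ‖M‖ := by
  have hs : Summable (fun k : ℕ => (k !⁻¹ : ℂ) • M ^ k) := NormedSpace.expSeries_summable' M
  have hsplit : (∑ i ∈ range 3, (i !⁻¹ : ℂ) • M ^ i) + ∑' k : ℕ, ((k+3)!⁻¹ : ℂ) • M ^ (k+3)
      = NormedSpace.exp M := by
    rw [NormedSpace.exp_eq_tsum ℂ]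
    exact Summable.sum_add_tsum_nat_add 3 hs
  have hpart : (∑ i ∈ range 3, (i !⁻¹ : ℂ) • M ^ i) = Tq M := by
    simp [Tq, Finset.sum_range_succ, Nat.factorial, pow_succ, mul_assoc]
  have heq : NormedSpace.exp M - Tq M = ∑' k : ℕ, ((k+3)!⁻¹ : ℂ) • M ^ (k+3) := by
    rw [← hpart, ← hsplit]; abel
  rw [heq]
  have hb : ∀ k : ℕ, ‖((k+3)!⁻¹ : ℂ) • M ^ (k+3)‖ ≤ ‖M‖^3 * (‖M‖^k / k !) := by
    intro k
    rw [norm_smul]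
    have h1 : ‖((k+3)!⁻¹ : ℂ)‖ = (((k+3)! : ℝ))⁻¹ := by simp
    rw [h1]
    have h2 : ‖M ^ (k+3)‖ ≤ ‖M‖^(k+3) := norm_pow_le' M (by omega)
    have h3 : (((k+3)! : ℝ))⁻¹ ≤ ((k ! : ℝ))⁻¹ := by
      apply inv_anti₀
      · positivity
      · exact_mod_cast Nat.factorial_le (by omega)
    calc (((k+3)! : ℝ))⁻¹ * ‖M ^ (k+3)‖ ≤ ((k ! : ℝ))⁻¹ * ‖M‖^(k+3) := by
          apply mul_le_mul h3 h2 (norm_nonneg _) (by positivity)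
      _ = ‖M‖^3 * (‖M‖^k / k !) := by rw [pow_add]; ring
  have hsummable : Summable (fun k : ℕ => ‖M‖^3 * (‖M‖^k / k !)) :=
    (Real.summable_pow_div_factorial ‖M‖).mul_left _
  have hnorm_summable : Summable (fun k : ℕ => ‖((k+3)!⁻¹ : ℂ) • M ^ (k+3)‖) :=
    Summable.of_nonneg_of_le (fun k => norm_nonneg _) hb hsummable
  calc ‖∑' k : ℕ, ((k+3)!⁻¹ : ℂ) • M ^ (k+3)‖ ≤ ∑' k : ℕ, ‖((k+3)!⁻¹ : ℂ) • M ^ (k+3)‖ :=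
        norm_tsum_le_tsum_norm hnorm_summable
    _ ≤ ∑' k : ℕ, ‖M‖^3 * (‖M‖^k / k !) := Summable.tsum_le_tsum hb hnorm_summable hsummable
    _ = ‖M‖^3 * ∑' k : ℕ, (‖M‖^k / k !) := tsum_mul_left
    _ = ‖M‖^3 * Real.exp ‖M‖ := by
        rw [Real.exp_eq_exp_ℝ, NormedSpace.exp_eq_tsum_div]

theorem Tq_norm_le (M : R) : ‖Tq M‖ ≤ ‖(1:R)‖ + ‖M‖ + ‖M‖^2/2 := by
  unfold Tq
  calc ‖1 + M + (2:ℂ)⁻¹ • (M*M)‖ ≤ ‖(1:R) + M‖ + ‖(2:ℂ)⁻¹ • (M*M)‖ := norm_add_le _ _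
    _ ≤ (‖(1:R)‖ + ‖M‖) + ‖(2:ℂ)⁻¹ • (M*M)‖ := by gcongr; exact norm_add_le _ _
    _ ≤ (‖(1:R)‖ + ‖M‖) + ‖M‖^2/2 := by
        have h : ‖(2:ℂ)⁻¹ • (M*M)‖ = 2⁻¹ * ‖M*M‖ := by
          rw [norm_smul]; norm_num
        rw [h]
        have := norm_mul_le M M
        nlinarith [norm_nonneg M, norm_nonneg (M*M)]
    _ = ‖(1:R)‖ + ‖M‖ + ‖M‖^2/2 := by ring

theorem exp_norm_le' (M : R) :
    ‖NormedSpace.exp M‖ ≤ ‖(1:R)‖ + ‖M‖ + ‖M‖^2/2 + ‖M‖^3 * Real.exp ‖M‖ := by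
  have h1 := Tq_tail_bound M
  have h2 := Tq_norm_le M
  calc ‖NormedSpace.exp M‖ = ‖(NormedSpace.exp M - Tq M) + Tq M‖ := by rw [sub_add_cancel]
    _ ≤ ‖NormedSpace.exp M - Tq M‖ + ‖Tq M‖ := norm_add_le _ _
    _ ≤ ‖(1:R)‖ + ‖M‖ + ‖M‖^2/2 + ‖M‖^3 * Real.exp ‖M‖ := by linarith

theorem Tq_key (z : ℂ) (A B : R) :
    Tq ((z/2)•B) * Tq (z•A) * Tq ((z/2)•B) - Tq (z•(A+B)) =
    (z^3/4)•(B*(A*B)) + (z^3/4)•(B*(A*A)) + (z^3/4)•(A*(A*B)) + (z^3/8)•(B*(B*A))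
      + (z^3/8)•(A*(B*B)) + (z^3/8)•(B*(B*B))
    + (z^4/16)•(B*(B*(A*A))) + (z^4/16)•(A*(A*(B*B))) + (z^4/8)•(B*(A*(A*B)))
      + (z^4/16)•(B*(B*(A*B))) + (z^4/16)•(B*(A*(B*B))) + (z^4/64)•(B*(B*(B*B)))
    + (z^5/32)•(B*(B*(A*(A*B)))) + (z^5/32)•(B*(A*(A*(B*B)))) + (z^5/64)•(B*(B*(A*(B*B))))
    + (z^6/128)•(B*(B*(A*(A*(B*B))))) := by
  unfold Tq
  simp only [mul_add, add_mul, smul_mul_assoc, mul_smul_comm, smul_smul, one_mul, mul_one,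
    smul_add, mul_assoc]
  module

theorem Tq_key_norm (z : ℂ) (hz : ‖z‖ ≤ 1) (A B : R) :
    ‖Tq ((z/2)•B) * Tq (z•A) * Tq ((z/2)•B) - Tq (z•(A+B))‖
      ≤ ‖z‖^3 * (16 * (1+‖A‖+‖B‖)^6) := by
  set K : ℝ := 1 + ‖A‖ + ‖B‖ with hKdef
  have hK : 1 ≤ K := by have := norm_nonneg A; have := norm_nonneg B; simp [hKdef]; linarith
  have hK0 : 0 ≤ K := by linarith
  have hA : ‖A‖ ≤ K^1 := by simp [hKdef]; linarith [norm_nonneg B]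
  have hB : ‖B‖ ≤ K^1 := by simp [hKdef]; linarith [norm_nonneg A]
  have hm : ∀ (x y : R) (i j : ℕ), ‖x‖ ≤ K^i → ‖y‖ ≤ K^j → ‖x*y‖ ≤ K^(i+j) := by
    intro x y i j hx hy
    calc ‖x*y‖ ≤ ‖x‖*‖y‖ := norm_mul_le _ _
      _ ≤ K^i * K^j := mul_le_mul hx hy (norm_nonneg _) (by positivity)
      _ = K^(i+j) := (pow_add K i j).symm
  set M0 : ℝ := ‖z‖^3 * K^6 with hM0
  have hterm : ∀ (c : ℂ) (d m : ℕ) (X : R), 3 ≤ d → m ≤ 6 → 1 ≤ ‖c‖ → ‖X‖ ≤ K^m →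
      ‖(z^d/c) • X‖ ≤ M0 := by
    intro c d m X hd hm6 hc hX
    rw [norm_smul, norm_div, norm_pow]
    have h1 : ‖z‖^d ≤ ‖z‖^3 := pow_le_pow_of_le_one (norm_nonneg _) hz hd
    have h2 : ‖z‖^d / ‖c‖ ≤ ‖z‖^3 := le_trans (div_le_self (by positivity) hc) h1
    have h3 : ‖X‖ ≤ K^6 := le_trans hX (pow_le_pow_right₀ hK hm6)
    calc ‖z‖^d / ‖c‖ * ‖X‖ ≤ ‖z‖^3 * K^6 :=
          mul_le_mul h2 h3 (norm_nonneg _) (by positivity)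
      _ = M0 := hM0.symm
  have H : ∀ {x y : R} {p q : ℝ}, ‖x‖ ≤ p → ‖y‖ ≤ q → ‖x + y‖ ≤ p + q :=
    fun hx hy => (norm_add_le _ _).trans (add_le_add hx hy)
  rw [Tq_key z A B]
  have c4 : (1:ℝ) ≤ ‖(4:ℂ)‖ := by norm_num
  have c8 : (1:ℝ) ≤ ‖(8:ℂ)‖ := by norm_num
  have c16 : (1:ℝ) ≤ ‖(16:ℂ)‖ := by norm_num
  have c32 : (1:ℝ) ≤ ‖(32:ℂ)‖ := by norm_num
  have c64 : (1:ℝ) ≤ ‖(64:ℂ)‖ := by norm_num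
  have c128 : (1:ℝ) ≤ ‖(128:ℂ)‖ := by norm_num
  have h1 := hterm 4 3 3 (B*(A*B)) (by norm_num) (by norm_num) c4 (hm _ _ 1 2 hB (hm _ _ 1 1 hA hB))
  have h2 := hterm 4 3 3 (B*(A*A)) (by norm_num) (by norm_num) c4 (hm _ _ 1 2 hB (hm _ _ 1 1 hA hA))
  have h3 := hterm 4 3 3 (A*(A*B)) (by norm_num) (by norm_num) c4 (hm _ _ 1 2 hA (hm _ _ 1 1 hA hB))
  have h4 := hterm 8 3 3 (B*(B*A)) (by norm_num) (by norm_num) c8 (hm _ _ 1 2 hB (hm _ _ 1 1 hB hA))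
  have h5 := hterm 8 3 3 (A*(B*B)) (by norm_num) (by norm_num) c8 (hm _ _ 1 2 hA (hm _ _ 1 1 hB hB))
  have h6 := hterm 8 3 3 (B*(B*B)) (by norm_num) (by norm_num) c8 (hm _ _ 1 2 hB (hm _ _ 1 1 hB hB))
  have h7 := hterm 16 4 4 (B*(B*(A*A))) (by norm_num) (by norm_num) c16
    (hm _ _ 1 3 hB (hm _ _ 1 2 hB (hm _ _ 1 1 hA hA)))
  have h8 := hterm 16 4 4 (A*(A*(B*B))) (by norm_num) (by norm_num) c16
    (hm _ _ 1 3 hA (hm _ _ 1 2 hA (hm _ _ 1 1 hB hB)))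
  have h9 := hterm 8 4 4 (B*(A*(A*B))) (by norm_num) (by norm_num) c8
    (hm _ _ 1 3 hB (hm _ _ 1 2 hA (hm _ _ 1 1 hA hB)))
  have h10 := hterm 16 4 4 (B*(B*(A*B))) (by norm_num) (by norm_num) c16
    (hm _ _ 1 3 hB (hm _ _ 1 2 hB (hm _ _ 1 1 hA hB)))
  have h11 := hterm 16 4 4 (B*(A*(B*B))) (by norm_num) (by norm_num) c16
    (hm _ _ 1 3 hB (hm _ _ 1 2 hA (hm _ _ 1 1 hB hB)))
  have h12 := hterm 64 4 4 (B*(B*(B*B))) (by norm_num) (by norm_num) c64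
    (hm _ _ 1 3 hB (hm _ _ 1 2 hB (hm _ _ 1 1 hB hB)))
  have h13 := hterm 32 5 5 (B*(B*(A*(A*B)))) (by norm_num) (by norm_num) c32
    (hm _ _ 1 4 hB (hm _ _ 1 3 hB (hm _ _ 1 2 hA (hm _ _ 1 1 hA hB))))
  have h14 := hterm 32 5 5 (B*(A*(A*(B*B)))) (by norm_num) (by norm_num) c32
    (hm _ _ 1 4 hB (hm _ _ 1 3 hA (hm _ _ 1 2 hA (hm _ _ 1 1 hB hB))))
  have h15 := hterm 64 5 5 (B*(B*(A*(B*B)))) (by norm_num) (by norm_num) c64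
    (hm _ _ 1 4 hB (hm _ _ 1 3 hB (hm _ _ 1 2 hA (hm _ _ 1 1 hB hB))))
  have h16 := hterm 128 6 6 (B*(B*(A*(A*(B*B))))) (by norm_num) (by norm_num) c128
    (hm _ _ 1 5 hB (hm _ _ 1 4 hB (hm _ _ 1 3 hA (hm _ _ 1 2 hA (hm _ _ 1 1 hB hB)))))
  have htot := H (H (H (H (H (H (H (H (H (H (H (H (H (H (H h1 h2) h3) h4) h5) h6) h7) h8)
    h9) h10) h11) h12) h13) h14) h15) h16
  calc _ ≤ _ := htot
    _ = ‖z‖^3 * (16 * K^6) := by rw [hM0]; ring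

end Aux

set_option maxHeartbeats 1000000 in
theorem strang_general {R : Type*} [NormedRing R] [NormedAlgebra ℂ R] [CompleteSpace R]
    (A B : R) :
    ∃ C > (0 : ℝ), ∃ t₀ > (0 : ℝ), ∀ t : ℝ, |t| ≤ t₀ →
      ‖NormedSpace.exp ((t : ℂ) • (A + B)) -
        NormedSpace.exp (((t : ℂ) / 2) • B) * NormedSpace.exp ((t : ℂ) • A) *
          NormedSpace.exp (((t : ℂ) / 2) • B)‖ ≤ C * |t| ^ 3 := by
  set a : ℝ := ‖A‖ with ha
  set b : ℝ := ‖B‖ with hb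
  have ha0 : 0 ≤ a := norm_nonneg A
  have hb0 : 0 ≤ b := norm_nonneg B
  set o : ℝ := ‖(1:R)‖ with ho
  have ho0 : 0 ≤ o := norm_nonneg _
  have hea : 0 ≤ a^3 * Real.exp a := mul_nonneg (pow_nonneg ha0 3) (Real.exp_pos a).le
  have heb : 0 ≤ b^3 * Real.exp b := mul_nonneg (pow_nonneg hb0 3) (Real.exp_pos b).le
  set Fa : ℝ := o + a + a^2/2 + a^3 * Real.exp a with hFa
  set Fb : ℝ := o + b + b^2/2 + b^3 * Real.exp b with hFb
  have hFa0 : 0 ≤ Fa := by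
    rw [hFa]; linarith only [ho0, ha0, hea, sq_nonneg a]
  have hFb0 : 0 ≤ Fb := by
    rw [hFb]; linarith only [ho0, hb0, heb, sq_nonneg b]
  set c1 : ℝ := (a+b)^3 * Real.exp (a+b) with hc1
  set c2 : ℝ := (b^3 * Real.exp b) * (Fa*Fb) + Fb * ((a^3 * Real.exp a) * Fb)
      + Fb * (Fa * (b^3 * Real.exp b)) with hc2
  set c3 : ℝ := 16 * (1+a+b)^6 with hc3
  have hc1nn : 0 ≤ c1 := by
    rw [hc1]
    exact mul_nonneg (pow_nonneg (by linarith) 3) (Real.exp_pos _).le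
  have hc2nn : 0 ≤ c2 := by
    rw [hc2]
    have k1 := mul_nonneg heb (mul_nonneg hFa0 hFb0)
    have k2 := mul_nonneg hFb0 (mul_nonneg hea hFb0)
    have k3 := mul_nonneg hFb0 (mul_nonneg hFa0 heb)
    linarith
  have hc3nn : 0 ≤ c3 := by
    rw [hc3]
    have : (0:ℝ) ≤ (1+a+b) := by linarith
    nlinarith [pow_nonneg this 6]
  refine ⟨c1 + c2 + c3 + 1, by linarith, 1, one_pos, ?_⟩
  intro t ht
  set z : ℂ := (t:ℂ) with hzdef
  have hzn : ‖z‖ = |t| := by rw [hzdef, Complex.norm_real, Real.norm_eq_abs]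
  have hz1 : ‖z‖ ≤ 1 := by rw [hzn]; exact ht
  have hz0 : (0:ℝ) ≤ ‖z‖ := norm_nonneg z
  have hz3 : (0:ℝ) ≤ ‖z‖^3 := pow_nonneg hz0 3
  -- norms of the scaled matrices
  have hzAeq : ‖z • A‖ = ‖z‖ * a := by rw [norm_smul, ← ha]
  have hzBeq : ‖(z/2) • B‖ = ‖z‖/2 * b := by
    rw [norm_smul, norm_div, ← hb]
    norm_num
  have hzA : ‖z • A‖ ≤ a := by
    rw [hzAeq]; exact mul_le_of_le_one_left ha0 hz1
  have hzB : ‖(z/2) • B‖ ≤ b := by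
    rw [hzBeq]
    exact mul_le_of_le_one_left hb0 (by linarith only [hz1, hz0])
  have hzB' : ‖(z/2) • B‖ ≤ ‖z‖ * b := by
    rw [hzBeq]
    exact mul_le_mul_of_nonneg_right (by linarith only [hz0]) hb0
  have hzS : ‖z • (A+B)‖ ≤ ‖z‖ * (a+b) := by
    rw [norm_smul]
    have h := norm_add_le A B
    rw [← ha, ← hb] at h
    exact mul_le_mul_of_nonneg_left h hz0
  -- Term 1: exp tail at z•(A+B)
  have hT1 : ‖NormedSpace.exp (z • (A+B)) - Tq (z • (A+B))‖ ≤ ‖z‖^3 * c1 := by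
    refine (Tq_tail_bound _).trans ?_
    have h1 : ‖z • (A+B)‖^3 ≤ ‖z‖^3 * (a+b)^3 := by
      rw [← mul_pow]
      exact pow_le_pow_left₀ (norm_nonneg _) hzS 3
    have h2 : Real.exp ‖z • (A+B)‖ ≤ Real.exp (a+b) := by
      apply Real.exp_le_exp.2
      refine hzS.trans ?_
      exact mul_le_of_le_one_left (by linarith only [ha0, hb0]) hz1
    rw [hc1]
    calc ‖z • (A+B)‖^3 * Real.exp ‖z • (A+B)‖ ≤ (‖z‖^3 * (a+b)^3) * Real.exp (a+b) :=
          mul_le_mul h1 h2 (Real.exp_pos _).le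
            (mul_nonneg hz3 (pow_nonneg (by linarith) 3))
      _ = ‖z‖^3 * ((a+b)^3 * Real.exp (a+b)) := by ring
  -- bounds for individual exp factors and Tq factors
  have hexpA : ‖NormedSpace.exp (z • A)‖ ≤ Fa := by
    refine (exp_norm_le' _).trans ?_
    rw [hFa, ← ho]
    have h := hzA
    have h0 : (0:ℝ) ≤ ‖z • A‖ := norm_nonneg _
    have h3 : ‖z•A‖^3 * Real.exp ‖z•A‖ ≤ a^3 * Real.exp a :=
      mul_le_mul (pow_le_pow_left₀ h0 h 3) (Real.exp_le_exp.2 h) (Real.exp_pos _).le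
        (pow_nonneg ha0 3)
    have hsq : ‖z•A‖^2 ≤ a^2 := pow_le_pow_left₀ h0 h 2
    linarith only [h, hsq, h3]
  have hexpB : ‖NormedSpace.exp ((z/2) • B)‖ ≤ Fb := by
    refine (exp_norm_le' _).trans ?_
    rw [hFb, ← ho]
    have h := hzB
    have h0 : (0:ℝ) ≤ ‖(z/2) • B‖ := norm_nonneg _
    have h3 : ‖(z/2)•B‖^3 * Real.exp ‖(z/2)•B‖ ≤ b^3 * Real.exp b :=
      mul_le_mul (pow_le_pow_left₀ h0 h 3) (Real.exp_le_exp.2 h) (Real.exp_pos _).le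
        (pow_nonneg hb0 3)
    have hsq : ‖(z/2)•B‖^2 ≤ b^2 := pow_le_pow_left₀ h0 h 2
    linarith only [h, hsq, h3]
  have hTA : ‖Tq (z • A)‖ ≤ Fa := by
    refine (Tq_norm_le _).trans ?_
    rw [hFa, ← ho]
    have h := hzA
    have h0 : (0:ℝ) ≤ ‖z • A‖ := norm_nonneg _
    have hsq : ‖z•A‖^2 ≤ a^2 := pow_le_pow_left₀ h0 h 2
    linarith only [h, hsq, hea]
  have hTB : ‖Tq ((z/2) • B)‖ ≤ Fb := by
    refine (Tq_norm_le _).trans ?_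
    rw [hFb, ← ho]
    have h := hzB
    have h0 : (0:ℝ) ≤ ‖(z/2) • B‖ := norm_nonneg _
    have hsq : ‖(z/2)•B‖^2 ≤ b^2 := pow_le_pow_left₀ h0 h 2
    linarith only [h, hsq, heb]
  -- tail bounds for each factor
  have htailA : ‖NormedSpace.exp (z • A) - Tq (z • A)‖ ≤ ‖z‖^3 * (a^3 * Real.exp a) := by
    refine (Tq_tail_bound _).trans ?_
    have h1 : ‖z • A‖^3 = ‖z‖^3 * a^3 := by rw [hzAeq, mul_pow]
    have h2 : Real.exp ‖z • A‖ ≤ Real.exp a := Real.exp_le_exp.2 hzA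
    calc ‖z•A‖^3 * Real.exp ‖z•A‖ ≤ ‖z•A‖^3 * Real.exp a := by
          apply mul_le_mul_of_nonneg_left h2 (pow_nonneg (norm_nonneg _) 3)
      _ = (‖z‖^3 * a^3) * Real.exp a := by rw [h1]
      _ = ‖z‖^3 * (a^3 * Real.exp a) := by ring
  have htailB : ‖NormedSpace.exp ((z/2) • B) - Tq ((z/2) • B)‖
      ≤ ‖z‖^3 * (b^3 * Real.exp b) := by
    refine (Tq_tail_bound _).trans ?_
    have h1 : ‖(z/2) • B‖^3 ≤ ‖z‖^3 * b^3 := by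
      calc ‖(z/2) • B‖^3 ≤ (‖z‖*b)^3 := pow_le_pow_left₀ (norm_nonneg _) hzB' 3
        _ = ‖z‖^3 * b^3 := by ring
    have h2 : Real.exp ‖(z/2) • B‖ ≤ Real.exp b := Real.exp_le_exp.2 hzB
    calc ‖(z/2)•B‖^3 * Real.exp ‖(z/2)•B‖ ≤ (‖z‖^3 * b^3) * Real.exp b :=
          mul_le_mul h1 h2 (Real.exp_pos _).le
            (mul_nonneg hz3 (pow_nonneg hb0 3))
      _ = ‖z‖^3 * (b^3 * Real.exp b) := by ring
  -- decomposition
  set E1 := NormedSpace.exp ((z/2) • B)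
  set E2 := NormedSpace.exp (z • A)
  set TB := Tq ((z/2) • B)
  set TA := Tq (z • A)
  have decomp : NormedSpace.exp (z • (A+B)) - E1 * E2 * E1 =
      (NormedSpace.exp (z • (A+B)) - Tq (z • (A+B)))
      - ((E1 - TB) * (E2 * E1) + TB * ((E2 - TA) * E1) + TB * (TA * (E1 - TB)))
      - (TB * TA * TB - Tq (z • (A+B))) := by
    simp only [sub_mul, mul_sub, mul_assoc]
    abel
  have hmid : ‖(E1 - TB) * (E2 * E1) + TB * ((E2 - TA) * E1) + TB * (TA * (E1 - TB))‖
      ≤ ‖z‖^3 * c2 := by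
    have k1 : ‖(E1 - TB) * (E2 * E1)‖ ≤ ‖z‖^3 * ((b^3 * Real.exp b) * (Fa * Fb)) := by
      calc ‖(E1 - TB) * (E2 * E1)‖ ≤ ‖E1 - TB‖ * ‖E2 * E1‖ := norm_mul_le _ _
        _ ≤ (‖z‖^3 * (b^3 * Real.exp b)) * (Fa * Fb) := by
            apply mul_le_mul htailB ?_ (norm_nonneg _) (mul_nonneg hz3 heb)
            calc ‖E2 * E1‖ ≤ ‖E2‖ * ‖E1‖ := norm_mul_le _ _
              _ ≤ Fa * Fb := mul_le_mul hexpA hexpB (norm_nonneg _) hFa0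
        _ = ‖z‖^3 * ((b^3 * Real.exp b) * (Fa * Fb)) := by ring
    have k2 : ‖TB * ((E2 - TA) * E1)‖ ≤ ‖z‖^3 * (Fb * ((a^3 * Real.exp a) * Fb)) := by
      calc ‖TB * ((E2 - TA) * E1)‖ ≤ ‖TB‖ * ‖(E2 - TA) * E1‖ := norm_mul_le _ _
        _ ≤ Fb * ((‖z‖^3 * (a^3 * Real.exp a)) * Fb) := by
            apply mul_le_mul hTB ?_ (norm_nonneg _) hFb0
            calc ‖(E2 - TA) * E1‖ ≤ ‖E2 - TA‖ * ‖E1‖ := norm_mul_le _ _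
              _ ≤ (‖z‖^3 * (a^3 * Real.exp a)) * Fb :=
                  mul_le_mul htailA hexpB (norm_nonneg _) (mul_nonneg hz3 hea)
        _ = ‖z‖^3 * (Fb * ((a^3 * Real.exp a) * Fb)) := by ring
    have k3 : ‖TB * (TA * (E1 - TB))‖ ≤ ‖z‖^3 * (Fb * (Fa * (b^3 * Real.exp b))) := by
      calc ‖TB * (TA * (E1 - TB))‖ ≤ ‖TB‖ * ‖TA * (E1 - TB)‖ := norm_mul_le _ _
        _ ≤ Fb * (Fa * (‖z‖^3 * (b^3 * Real.exp b))) := by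
            apply mul_le_mul hTB ?_ (norm_nonneg _) hFb0
            calc ‖TA * (E1 - TB)‖ ≤ ‖TA‖ * ‖E1 - TB‖ := norm_mul_le _ _
              _ ≤ Fa * (‖z‖^3 * (b^3 * Real.exp b)) :=
                  mul_le_mul hTA htailB (norm_nonneg _) hFa0
        _ = ‖z‖^3 * (Fb * (Fa * (b^3 * Real.exp b))) := by ring
    calc ‖(E1 - TB) * (E2 * E1) + TB * ((E2 - TA) * E1) + TB * (TA * (E1 - TB))‖
        ≤ ‖(E1 - TB) * (E2 * E1) + TB * ((E2 - TA) * E1)‖ + ‖TB * (TA * (E1 - TB))‖ :=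
          norm_add_le _ _
      _ ≤ (‖(E1 - TB) * (E2 * E1)‖ + ‖TB * ((E2 - TA) * E1)‖) + ‖TB * (TA * (E1 - TB))‖ :=
          add_le_add_left (norm_add_le _ _) _
      _ ≤ ‖z‖^3 * ((b^3 * Real.exp b) * (Fa * Fb)) + ‖z‖^3 * (Fb * ((a^3 * Real.exp a) * Fb))
          + ‖z‖^3 * (Fb * (Fa * (b^3 * Real.exp b))) :=
          add_le_add (add_le_add k1 k2) k3
      _ = ‖z‖^3 * ((b^3 * Real.exp b) * (Fa*Fb) + Fb * ((a^3 * Real.exp a) * Fb)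
          + Fb * (Fa * (b^3 * Real.exp b))) := by ring
      _ = ‖z‖^3 * c2 := by rw [hc2]
  have hkey : ‖TB * TA * TB - Tq (z • (A+B))‖ ≤ ‖z‖^3 * c3 := by
    have h := Tq_key_norm z hz1 A B
    rw [← ha, ← hb] at h
    rw [hc3]
    exact h
  -- assemble
  have hfinal : ‖NormedSpace.exp (z • (A+B)) - E1 * E2 * E1‖ ≤ ‖z‖^3 * (c1 + c2 + c3) := by
    rw [decomp]
    set X := NormedSpace.exp (z • (A+B)) - Tq (z • (A+B)) with hX
    set Y := (E1 - TB) * (E2 * E1) + TB * ((E2 - TA) * E1) + TB * (TA * (E1 - TB)) with hY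
    set Z := TB * TA * TB - Tq (z • (A+B)) with hZ
    calc ‖X - Y - Z‖ ≤ ‖X - Y‖ + ‖Z‖ := norm_sub_le _ _
      _ ≤ (‖X‖ + ‖Y‖) + ‖Z‖ := add_le_add_left (norm_sub_le _ _) _
      _ ≤ (‖z‖^3 * c1 + ‖z‖^3 * c2) + ‖z‖^3 * c3 :=
          add_le_add (add_le_add hT1 hmid) hkey
      _ = ‖z‖^3 * (c1 + c2 + c3) := by ring
  have habs : ‖z‖^3 = |t|^3 := by rw [hzn]
  have ht3 : (0:ℝ) ≤ |t|^3 := by positivity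
  calc ‖NormedSpace.exp (z • (A+B)) - E1 * E2 * E1‖ ≤ ‖z‖^3 * (c1 + c2 + c3) := hfinal
    _ = (c1 + c2 + c3) * |t|^3 := by rw [habs]; ring
    _ ≤ (c1 + c2 + c3 + 1) * |t|^3 :=
        mul_le_mul_of_nonneg_right (by linarith only []) ht3

theorem strang_splitting_error (n : ℕ) (hn : 1 ≤ n)
    (A B : Matrix (Fin n) (Fin n) ℂ) :
    ∃ C > (0 : ℝ), ∃ t₀ > (0 : ℝ), ∀ t : ℝ, |t| ≤ t₀ →
      ‖NormedSpace.exp ((t : ℂ) • (A + B)) -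
        NormedSpace.exp (((t : ℂ) / 2) • B) * NormedSpace.exp ((t : ℂ) • A) *
          NormedSpace.exp (((t : ℂ) / 2) • B)‖ ≤ C * |t| ^ 3 :=
  strang_general A B
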